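/- arXiv:1811.05707 — 2 statements merged into one kernel-verified Lean document; each statement's English description precedes it below -/
import Mathlib

section
/- For every integer k ≥ 7, h_{k,k+6} = (256/45)k^6 - (992/15)k^5 + (4292/9)k^4 - (13427/6)k^3 + (617753/90)k^2 - (189503/15)k + 10672 (equivalently, 90·h_{k,k+6} = 512k^6 - 5952k^5 + 42920k^4 - 201405k^3 + 617753k^2 - 1137018k + 960480). -/
/-- Integer binomial coefficient with the convention
`C(a,b) = a!/(b!(a-b)!)` if `0 ≤ b ≤ a` and `C(a,b) = 0` otherwise. -/
def ichoose (a b : ℤ) : ℤ := if 0 ≤ b ∧ b ≤ a then (a.toNat.choose b.toNat : ℤ) else 0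

/-- The Delannoy numbers `D(n,m) = ∑_{k=0}^m C(m,k) C(n+m-k, m)`. -/
def delannoy (n m : ℕ) : ℕ :=
  ∑ k ∈ Finset.range (m + 1), Nat.choose m k * Nat.choose (n + m - k) m

/-- `h k n = ∑_{i=0}^{k-1} D(k-1-i, i) C(n-i+k-2, 2k-2)` is the number of
column-convex polyominoes with `k` columns and area `n`. -/
def ccPoly (k n : ℕ) : ℤ :=
  ∑ i ∈ Finset.range k,
    (delannoy (k - 1 - i) i : ℤ) * ichoose ((n : ℤ) - i + k - 2) (2 * (k : ℤ) - 2)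

/-- `r k m = ∑_{i=k}^{m-k} h_{k,i} h_{k,m-i}` is the number of plateau polycubes
of width `k` and lateral area `m`. -/
def plateau (k m : ℕ) : ℤ :=
  ∑ i ∈ Finset.Icc k (m - k), ccPoly k i * ccPoly k (m - i)

lemma qc0 (n : ℕ) : ((n.choose 0 : ℕ) : ℚ) = 1 := by simp

lemma qc1 (n : ℕ) : ((n.choose 1 : ℕ) : ℚ) = (n:ℚ) := by simp

lemma qc2 (n : ℕ) : ((n.choose 2 : ℕ) : ℚ) = ((n:ℚ)*((n:ℚ)-1))/2 := by
  induction n with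
  | zero => norm_num
  | succ n ih =>
    have h : (n+1).choose 2 = n.choose 1 + n.choose 2 := Nat.choose_succ_succ n 1
    rw [h]; push_cast [ih, qc1]; ring

lemma qc3 (n : ℕ) : ((n.choose 3 : ℕ) : ℚ) = ((n:ℚ)*((n:ℚ)-1)*((n:ℚ)-2))/6 := by
  induction n with
  | zero => norm_num
  | succ n ih =>
    have h : (n+1).choose 3 = n.choose 2 + n.choose 3 := Nat.choose_succ_succ n 2
    rw [h]; push_cast [ih, qc2]; ring

lemma qc4 (n : ℕ) : ((n.choose 4 : ℕ) : ℚ) = ((n:ℚ)*((n:ℚ)-1)*((n:ℚ)-2)*((n:ℚ)-3))/24 := by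
  induction n with
  | zero => norm_num
  | succ n ih =>
    have h : (n+1).choose 4 = n.choose 3 + n.choose 4 := Nat.choose_succ_succ n 3
    rw [h]; push_cast [ih, qc3]; ring

lemma qc5 (n : ℕ) : ((n.choose 5 : ℕ) : ℚ) = ((n:ℚ)*((n:ℚ)-1)*((n:ℚ)-2)*((n:ℚ)-3)*((n:ℚ)-4))/120 := by
  induction n with
  | zero => norm_num
  | succ n ih =>
    have h : (n+1).choose 5 = n.choose 4 + n.choose 5 := Nat.choose_succ_succ n 4
    rw [h]; push_cast [ih, qc4]; ring

lemma qc6 (n : ℕ) : ((n.choose 6 : ℕ) : ℚ) = ((n:ℚ)*((n:ℚ)-1)*((n:ℚ)-2)*((n:ℚ)-3)*((n:ℚ)-4)*((n:ℚ)-5))/720 := by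
  induction n with
  | zero => norm_num
  | succ n ih =>
    have h : (n+1).choose 6 = n.choose 5 + n.choose 6 := Nat.choose_succ_succ n 5
    rw [h]; push_cast [ih, qc5]; ring

lemma ichoose_coe (a b : ℕ) (h : b ≤ a) : ichoose (a:ℤ) (b:ℤ) = (a.choose b : ℤ) := by
  rw [ichoose, if_pos ⟨Int.natCast_nonneg b, by exact_mod_cast h⟩]
  simp


lemma key (m : ℕ) : ccPoly (m+7) (m+7+6)
    = ∑ i ∈ Finset.range 7, (delannoy (m+6-i) i : ℤ) * ((2*m+18-i).choose (6-i) : ℤ) := by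
  rw [ccPoly]
  refine ((Finset.sum_subset (Finset.range_subset_range.mpr (by omega : 7 ≤ m+7)) ?_).symm).trans ?_
  · intro i _ hni
    simp only [Finset.mem_range, not_lt] at hni
    have hz : ichoose ((↑(m+7+6) : ℤ) - (i:ℕ) + (↑(m+7):ℤ) - 2) (2*(↑(m+7):ℤ) - 2) = 0 := by
      rw [ichoose, if_neg]
      rintro ⟨-, h⟩
      omega
    rw [hz, mul_zero]
  · refine Finset.sum_congr rfl ?_
    intro i hi
    simp only [Finset.mem_range] at hi
    have h1 : m+7-1-i = m+6-i := by omega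
    have h2 : ((↑(m+7+6) : ℤ) - (i:ℕ) + (↑(m+7):ℤ) - 2) = ((2*m+18-i : ℕ) : ℤ) := by omega
    have h3 : (2*(↑(m+7):ℤ) - 2) = ((2*m+12 : ℕ) : ℤ) := by omega
    rw [h1, h2, h3, ichoose_coe _ _ (by omega),
      show 2*m+12 = (2*m+18-i) - (6-i) by omega,
      Nat.choose_symm (by omega)]
lemma dl0 (m : ℕ) : ((delannoy (m+6) 0 : ℕ) : ℚ) = 1 := by
  simp only [delannoy, Finset.sum_range_succ, Finset.sum_range_zero,
    show m+6+0-0 = m+6 by omega]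
  push_cast [qc0, qc1, qc2, qc3, qc4, qc5, qc6]
  ring

lemma cb0 (m : ℕ) : (((2*m+18).choose 6 : ℕ) : ℚ) = (4/45)*(m:ℚ)^6 + (62/15)*(m:ℚ)^5 + (719/9)*(m:ℚ)^4 + (1643/2)*(m:ℚ)^3 + (213301/45)*(m:ℚ)^2 + (436511/30)*(m:ℚ) + 18564 := by
  push_cast [qc0, qc1, qc2, qc3, qc4, qc5, qc6]
  ring

lemma dl1 (m : ℕ) : ((delannoy (m+5) 1 : ℕ) : ℚ) = 2*(m:ℚ) + 11 := by
  simp only [delannoy, Finset.sum_range_succ, Finset.sum_range_zero,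
    show m+5+1-0 = m+6 by omega, show m+5+1-1 = m+5 by omega]
  push_cast [qc0, qc1, qc2, qc3, qc4, qc5, qc6]
  ring

lemma cb1 (m : ℕ) : (((2*m+17).choose 5 : ℕ) : ℚ) = (4/15)*(m:ℚ)^5 + 10*(m:ℚ)^4 + (449/3)*(m:ℚ)^3 + (2235/2)*(m:ℚ)^2 + (124877/30)*(m:ℚ) + 6188 := by
  push_cast [qc0, qc1, qc2, qc3, qc4, qc5, qc6]
  ring

lemma dl2 (m : ℕ) : ((delannoy (m+4) 2 : ℕ) : ℚ) = 2*(m:ℚ)^2 + 18*(m:ℚ) + 41 := by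
  simp only [delannoy, Finset.sum_range_succ, Finset.sum_range_zero,
    show m+4+2-0 = m+6 by omega, show m+4+2-1 = m+5 by omega, show m+4+2-2 = m+4 by omega]
  push_cast [qc0, qc1, qc2, qc3, qc4, qc5, qc6]
  ring

lemma cb2 (m : ℕ) : (((2*m+16).choose 4 : ℕ) : ℚ) = (2/3)*(m:ℚ)^4 + (58/3)*(m:ℚ)^3 + (1259/6)*(m:ℚ)^2 + (6061/6)*(m:ℚ) + 1820 := by
  push_cast [qc0, qc1, qc2, qc3, qc4, qc5, qc6]
  ring

lemma dl3 (m : ℕ) : ((delannoy (m+3) 3 : ℕ) : ℚ) = (4/3)*(m:ℚ)^3 + 14*(m:ℚ)^2 + (152/3)*(m:ℚ) + 63 := by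
  simp only [delannoy, Finset.sum_range_succ, Finset.sum_range_zero,
    show m+3+3-0 = m+6 by omega, show m+3+3-1 = m+5 by omega, show m+3+3-2 = m+4 by omega, show m+3+3-3 = m+3 by omega]
  push_cast [qc0, qc1, qc2, qc3, qc4, qc5, qc6]
  ring

lemma cb3 (m : ℕ) : (((2*m+15).choose 3 : ℕ) : ℚ) = (4/3)*(m:ℚ)^3 + 28*(m:ℚ)^2 + (587/3)*(m:ℚ) + 455 := by
  push_cast [qc0, qc1, qc2, qc3, qc4, qc5, qc6]
  ring

lemma dl4 (m : ℕ) : ((delannoy (m+2) 4 : ℕ) : ℚ) = (2/3)*(m:ℚ)^4 + (20/3)*(m:ℚ)^3 + (82/3)*(m:ℚ)^2 + (160/3)*(m:ℚ) + 41 := by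
  simp only [delannoy, Finset.sum_range_succ, Finset.sum_range_zero,
    show m+2+4-0 = m+6 by omega, show m+2+4-1 = m+5 by omega, show m+2+4-2 = m+4 by omega, show m+2+4-3 = m+3 by omega, show m+2+4-4 = m+2 by omega]
  push_cast [qc0, qc1, qc2, qc3, qc4, qc5, qc6]
  ring

lemma cb4 (m : ℕ) : (((2*m+14).choose 2 : ℕ) : ℚ) = 2*(m:ℚ)^2 + 27*(m:ℚ) + 91 := by
  push_cast [qc0, qc1, qc2, qc3, qc4, qc5, qc6]
  ring

lemma dl5 (m : ℕ) : ((delannoy (m+1) 5 : ℕ) : ℚ) = (4/15)*(m:ℚ)^5 + 2*(m:ℚ)^4 + 8*(m:ℚ)^3 + 18*(m:ℚ)^2 + (326/15)*(m:ℚ) + 11 := by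
  simp only [delannoy, Finset.sum_range_succ, Finset.sum_range_zero,
    show m+1+5-0 = m+6 by omega, show m+1+5-1 = m+5 by omega, show m+1+5-2 = m+4 by omega, show m+1+5-3 = m+3 by omega, show m+1+5-4 = m+2 by omega, show m+1+5-5 = m+1 by omega]
  push_cast [qc0, qc1, qc2, qc3, qc4, qc5, qc6]
  ring

lemma cb5 (m : ℕ) : (((2*m+13).choose 1 : ℕ) : ℚ) = 2*(m:ℚ) + 13 := by
  push_cast [qc0, qc1, qc2, qc3, qc4, qc5, qc6]
  ring

lemma dl6 (m : ℕ) : ((delannoy (m) 6 : ℕ) : ℚ) = (4/45)*(m:ℚ)^6 + (4/15)*(m:ℚ)^5 + (14/9)*(m:ℚ)^4 + (8/3)*(m:ℚ)^3 + (196/45)*(m:ℚ)^2 + (46/15)*(m:ℚ) + 1 := by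
  simp only [delannoy, Finset.sum_range_succ, Finset.sum_range_zero,
    show m+6-0 = m+6 by omega, show m+6-1 = m+5 by omega, show m+6-2 = m+4 by omega, show m+6-3 = m+3 by omega, show m+6-4 = m+2 by omega, show m+6-5 = m+1 by omega, show m+6-6 = m by omega]
  push_cast [qc0, qc1, qc2, qc3, qc4, qc5, qc6]
  ring

lemma cb6 (m : ℕ) : (((2*m+12).choose 0 : ℕ) : ℚ) = 1 := by
  push_cast [qc0, qc1, qc2, qc3, qc4, qc5, qc6]
  ring

set_option maxHeartbeats 1000000 in
theorem ccPoly_area_width_add_six (k : ℕ) (hk : 7 ≤ k) :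
    (ccPoly k (k + 6) : ℚ)
      = 256 / 45 * (k : ℚ) ^ 6 - 992 / 15 * (k : ℚ) ^ 5 + 4292 / 9 * (k : ℚ) ^ 4
          - 13427 / 6 * (k : ℚ) ^ 3 + 617753 / 90 * (k : ℚ) ^ 2 - 189503 / 15 * (k : ℚ)
          + 10672 := by
  obtain ⟨m, rfl⟩ : ∃ m, k = m + 7 := ⟨k - 7, by omega⟩
  rw [key]
  simp only [Finset.sum_range_succ, Finset.sum_range_zero, Nat.sub_zero,
    show m+6-1 = m+5 by omega, show m+6-2 = m+4 by omega, show m+6-3 = m+3 by omega, show m+6-4 = m+2 by omega, show m+6-5 = m+1 by omega, show m+6-6 = m by omega,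
    show 2*m+18-1 = 2*m+17 by omega, show 2*m+18-2 = 2*m+16 by omega, show 2*m+18-3 = 2*m+15 by omega, show 2*m+18-4 = 2*m+14 by omega, show 2*m+18-5 = 2*m+13 by omega, show 2*m+18-6 = 2*m+12 by omega]
  push_cast [dl0, dl1, dl2, dl3, dl4, dl5, dl6, cb0, cb1, cb2, cb3, cb4, cb5, cb6]
  ring
end

section
/- The numbers r_{k,m} of plateau polycubes of width k and lateral area m satisfy: (1) r_{k,2k} = 1 for every integer k ≥ 1; (2) r_{k,2k+1} = 8k - 8 for every integer k ≥ 2; (3) r_{k,2k+2} = 32k^2 - 70k + 48 for every integer k ≥ 3. -/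
lemma ichoose_nat (a b : ℕ) (h : b ≤ a) : ichoose a b = a.choose b := by
  unfold ichoose
  rw [if_pos ⟨Int.natCast_nonneg b, by exact_mod_cast h⟩]
  simp

lemma ichoose_zero {a b : ℤ} (h : a < b) : ichoose a b = 0 := by
  unfold ichoose; rw [if_neg]; omega

lemma d0 (n : ℕ) : delannoy n 0 = 1 := by simp [delannoy]

lemma d1 (n : ℕ) : delannoy n 1 = 2 * n + 1 := by
  simp [delannoy, Finset.sum_range_succ, Nat.choose_one_right]
  omega

lemma c2 (m : ℕ) : (m.choose 2 : ℤ) * 2 = m * m - m := by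
  induction m with
  | zero => simp
  | succ n ih =>
    rw [Nat.choose_succ_succ, Nat.choose_one_right]
    push_cast
    push_cast at ih
    nlinarith [ih]

lemma d2 (n : ℕ) : (delannoy n 2 : ℤ) = 2 * n ^ 2 + 2 * n + 1 := by
  have h : delannoy n 2 = (n+2).choose 2 + 2 * ((n+1).choose 2) + n.choose 2 := by
    simp [delannoy, Finset.sum_range_succ]
    try omega
  have h2 := c2 n
  have h3 := c2 (n+1)
  have h4 := c2 (n+2)
  push_cast at h3 h4 ⊢
  rw [h]
  push_cast
  nlinarith [h2, h3, h4]

lemma hkk (k : ℕ) (hk : 1 ≤ k) : ccPoly k k = 1 := by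
  unfold ccPoly
  rw [Finset.sum_eq_single_of_mem 0 (Finset.mem_range.2 hk)]
  · rw [Nat.sub_zero, d0]
    have e1 : ((k:ℤ) - (0:ℕ) + k - 2) = ((2*k-2 : ℕ) : ℤ) := by push_cast; omega
    have e2 : (2*(k:ℤ) - 2) = ((2*k-2 : ℕ) : ℤ) := by push_cast; omega
    rw [e1, e2, ichoose_nat _ _ le_rfl, Nat.choose_self]
    norm_num
  · intro b hb hb0
    rw [ichoose_zero, mul_zero]
    have := Finset.mem_range.1 hb
    push_cast
    omega

lemma hkk1 (k : ℕ) (hk : 2 ≤ k) : ccPoly k (k+1) = 4 * (k:ℤ) - 4 := by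
  obtain ⟨m, rfl⟩ : ∃ m, k = m + 2 := ⟨k - 2, by omega⟩
  unfold ccPoly
  rw [← Finset.sum_subset (Finset.range_subset_range.2 (by omega : 2 ≤ m + 2))]
  · rw [Finset.sum_range_succ, Finset.sum_range_one]
    norm_num
    have e1 : ((m:ℤ) + 2 + 1 + ((m:ℤ)+2) - 2) = ((2*m+3 : ℕ) : ℤ) := by push_cast; ring
    have e1' : ((m:ℤ) + 2 + ((m:ℤ)+2) - 2) = ((2*m+2 : ℕ) : ℤ) := by push_cast; ring
    have e2 : (2*((m:ℤ)+2) - 2) = ((2*m+2 : ℕ) : ℤ) := by push_cast; ring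
    have hc : (2*m+3).choose (2*m+2) = 2*m+3 := by
      rw [show 2*m+2 = (2*m+3) - 1 by omega, Nat.choose_symm (by omega), Nat.choose_one_right]
    rw [e1, e1', e2, ichoose_nat _ _ (by omega), ichoose_nat _ _ le_rfl, d0, d1,
      Nat.choose_self, hc]
    push_cast
    ring
  · intro x hx hx2
    rw [ichoose_zero, mul_zero]
    simp only [Finset.mem_range] at hx hx2
    push_cast
    omega

lemma hkk2 (k : ℕ) (hk : 3 ≤ k) : ccPoly k (k+2) = 8 * (k:ℤ)^2 - 19 * k + 16 := by
  obtain ⟨m, rfl⟩ : ∃ m, k = m + 3 := ⟨k - 3, by omega⟩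
  unfold ccPoly
  rw [← Finset.sum_subset (Finset.range_subset_range.2 (by omega : 3 ≤ m + 3))]
  · rw [Finset.sum_range_succ, Finset.sum_range_succ, Finset.sum_range_one]
    norm_num
    have e0 : ((m:ℤ) + 3 + 2 + ((m:ℤ)+3) - 2) = ((2*m+6 : ℕ) : ℤ) := by push_cast; ring
    have e1 : ((m:ℤ) + 3 + 2 - 1 + ((m:ℤ)+3) - 2) = ((2*m+5 : ℕ) : ℤ) := by push_cast; ring
    have e2 : ((m:ℤ) + 3 + ((m:ℤ)+3) - 2) = ((2*m+4 : ℕ) : ℤ) := by push_cast; ring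
    have e3 : (2*((m:ℤ)+3) - 2) = ((2*m+4 : ℕ) : ℤ) := by push_cast; ring
    have hc1 : (2*m+5).choose (2*m+4) = 2*m+5 := by
      rw [show 2*m+4 = (2*m+5) - 1 by omega, Nat.choose_symm (by omega), Nat.choose_one_right]
    have hc0 : (2*m+6).choose (2*m+4) = (2*m+6).choose 2 := by
      rw [show 2*m+4 = (2*m+6) - 2 by omega, Nat.choose_symm (by omega)]
    have hcv := c2 (2*m+6)
    have hd := d2 m
    rw [e0, e1, e2, e3, ichoose_nat _ _ (by omega), ichoose_nat _ _ (by omega),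
      ichoose_nat _ _ le_rfl, d0, d1, Nat.choose_self, hc1, hc0]
    push_cast at hcv hd ⊢
    nlinarith [hcv, hd]
  · intro x hx hx2
    rw [ichoose_zero, mul_zero]
    simp only [Finset.mem_range] at hx hx2
    push_cast
    omega

/-- First values of `r_{k,m}`: `r_{k,2k} = 1` for `k ≥ 1`, `r_{k,2k+1} = 8k-8` for `k ≥ 2`,
and `r_{k,2k+2} = 32k²-70k+48` for `k ≥ 3`. -/
theorem plateau_first_values :
    (∀ k : ℕ, 1 ≤ k → plateau k (2 * k) = 1) ∧
    (∀ k : ℕ, 2 ≤ k → plateau k (2 * k + 1) = 8 * (k : ℤ) - 8) ∧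
    (∀ k : ℕ, 3 ≤ k → plateau k (2 * k + 2) = 32 * (k : ℤ) ^ 2 - 70 * (k : ℤ) + 48) := by
  refine ⟨?_, ?_, ?_⟩
  · intro k hk
    unfold plateau
    rw [show 2*k - k = k by omega, Finset.Icc_self, Finset.sum_singleton,
      show 2*k - k = k by omega, hkk k hk]
    ring
  · intro k hk
    unfold plateau
    rw [show 2*k+1 - k = k+1 by omega,
      Finset.sum_Icc_succ_top (by omega : k ≤ k+1), Finset.Icc_self, Finset.sum_singleton,
      show 2*k+1 - k = k+1 by omega, show 2*k+1 - (k+1) = k by omega,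
      hkk k (by omega), hkk1 k hk]
    ring
  · intro k hk
    unfold plateau
    rw [show 2*k+2 - k = k+1+1 by omega,
      Finset.sum_Icc_succ_top (by omega : k ≤ k+1+1),
      Finset.sum_Icc_succ_top (by omega : k ≤ k+1), Finset.Icc_self, Finset.sum_singleton,
      show 2*k+2 - k = k+2 by omega, show 2*k+2 - (k+1) = k+1 by omega,
      show 2*k+2 - (k+1+1) = k by omega,
      hkk k (by omega), hkk1 k (by omega), show k+2 = k+1+1 by omega, hkk2 k hk]
    ring
end
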